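/- Let n ≥ 2 and 1 ≤ l ≤ n-1 be integers, and set θ = l/n. For a 2π-periodic function f whose Fourier coefficients vanish on multiples of n (f̂_{nk} = 0 for all k ∈ ℤ), define f^{l,n} by (f^{l,n})^(k) = f̂_{nk+l}. Let V be a smooth 2π-periodic function and V^n(x) = (1/n)V(nx). Then f and g (both with vanishing Fourier modes at multiples of n) satisfy g = V^n·∂_x f + Hf - (1/2π)∫_{-π}^{π} V^n ∂_x f dx if and only if for every 1 ≤ l ≤ n-1, the projections f^{l,n}, g^{l,n} satisfy g^{l,n} = V·∂_x f^{l,n} + iθ·V·f^{l,n} + H f^{l,n} - i·(f^{l,n})^(0). -/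

import Mathlib

open MeasureTheory


/-- The Fourier mode `e_k(x) = e^{ikx}`. -/
noncomputable def fmode (k : ℤ) (x : ℝ) : ℂ :=
  Complex.exp (Complex.I * (k : ℂ) * (x : ℂ))

lemma fmode_zero (x : ℝ) : fmode 0 x = 1 := by simp [fmode]

lemma fmode_mul (j k : ℤ) (x : ℝ) : fmode j x * fmode k x = fmode (j + k) x := by
  rw [fmode, fmode, fmode, ← Complex.exp_add]; push_cast; ring_nf

lemma norm_fmode (k : ℤ) (x : ℝ) : ‖fmode k x‖ = 1 := by
  rw [fmode, Complex.norm_exp]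
  norm_num [mul_comm, Complex.mul_I_re]

lemma fmode_continuous (k : ℤ) : Continuous (fmode k) := by
  unfold fmode; fun_prop

lemma fmode_stretch (k : ℤ) (n : ℕ) (x : ℝ) : fmode k ((n : ℝ) * x) = fmode ((n : ℤ) * k) x := by
  unfold fmode; push_cast; ring_nf

lemma integral_fmode (k : ℤ) :
    (∫ x in (-Real.pi)..Real.pi, fmode k x) = if k = 0 then (2 * Real.pi : ℂ) else 0 := by
  rcases eq_or_ne k 0 with h | h
  · subst h; simp [fmode_zero]; ring
  · simp only [h, if_false]
    have hc : (Complex.I * (k : ℂ)) ≠ 0 := by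
      refine mul_ne_zero Complex.I_ne_zero ?_
      exact_mod_cast h
    have hint := integral_exp_mul_complex (a := -Real.pi) (b := Real.pi) hc
    have heq : ∀ x : ℝ, fmode k x = Complex.exp ((Complex.I * k) * x) := by
      intro x; rw [fmode, mul_assoc]
    simp only [heq]
    rw [hint]
    have h1 : Complex.exp (Complex.I * k * (Real.pi : ℂ)) = (-1 : ℂ) ^ k := by
      rw [show Complex.I * k * (Real.pi : ℂ) = k * (Real.pi * Complex.I) by ring,
        Complex.exp_int_mul, Complex.exp_pi_mul_I]
    have h2 : Complex.exp (Complex.I * k * ((-Real.pi : ℝ) : ℂ)) = (-1 : ℂ) ^ (-k) := by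
      push_cast
      rw [show Complex.I * k * (-(Real.pi:ℂ)) = (-k : ℤ) * (Real.pi * Complex.I) by push_cast; ring,
        Complex.exp_int_mul, Complex.exp_pi_mul_I]
    rw [h1, h2]
    have h3 : ((-1 : ℂ) ^ (-k)) = (-1 : ℂ) ^ k := by
      rw [zpow_neg]
      rcases Int.even_or_odd k with he | ho
      · rw [he.neg_one_zpow]; norm_num
      · rw [ho.neg_one_zpow]; norm_num
    rw [h3]; simp

/-- the reindexing equivalence `(j,k) ↦ (s*j+k, j)` -/
def convEquiv (s : ℤ) : ℤ × ℤ ≃ ℤ × ℤ where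
  toFun p := (s * p.1 + p.2, p.1)
  invFun p := (p.2, p.1 - s * p.2)
  left_inv p := by simp
  right_inv p := by simp

lemma convEquiv_symm_apply (s : ℤ) (p : ℤ × ℤ) :
    (convEquiv s).symm p = (p.2, p.1 - s * p.2) := rfl

section
variable {u v : ℤ → ℂ} (s : ℤ)

lemma summable_double (hu : Summable fun k => ‖u k‖) (hv : Summable fun k => ‖v k‖) :
    Summable fun p : ℤ × ℤ => ‖u p.2‖ * ‖v (p.1 - s * p.2)‖ := by
  have h : Summable fun p : ℤ × ℤ => ‖u p.1‖ * ‖v p.2‖ := by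
    have := summable_mul_of_summable_norm (f := fun k => ‖u k‖) (g := fun k => ‖v k‖)
      (by simpa using hu.abs) (by simpa using hv.abs)
    simpa using this
  have h2 := ((convEquiv s).symm.summable_iff
    (f := fun p : ℤ × ℤ => ‖u p.1‖ * ‖v p.2‖)).2 h
  refine h2.congr fun p => ?_
  simp [convEquiv, Function.comp]

/-- the convolution coefficients -/
noncomputable def convC (s : ℤ) (u v : ℤ → ℂ) (m : ℤ) : ℂ := ∑' j : ℤ, u j * v (m - s * j)

lemma summable_conv (hu : Summable fun k => ‖u k‖) (hv : Summable fun k => ‖v k‖) :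
    Summable fun m : ℤ => ‖convC s u v m‖ := by
  have hd := summable_double s hu hv
  have houter : Summable fun m : ℤ => ∑' j : ℤ, ‖u j‖ * ‖v (m - s * j)‖ :=
    (hd.hasSum.prod_fiberwise fun m => (hd.prod_factor m).hasSum).summable
  refine Summable.of_nonneg_of_le (fun m => norm_nonneg _) (fun m => ?_) houter
  refine (norm_tsum_le_tsum_norm ?_).trans_eq ?_
  · simpa only [norm_mul] using hd.prod_factor m
  · simp only [norm_mul]

lemma summable_conv_inner (hu : Summable fun k => ‖u k‖) (hv : Summable fun k => ‖v k‖)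
    (m : ℤ) : Summable fun j : ℤ => u j * v (m - s * j) := by
  refine Summable.of_norm ?_
  simpa only [norm_mul] using (summable_double s hu hv).prod_factor m

/-- the key product formula -/
lemma prodS (hu : Summable fun k => ‖u k‖) (hv : Summable fun k => ‖v k‖) (x : ℝ) :
    (∑' j : ℤ, u j * fmode (s * j) x) * (∑' k : ℤ, v k * fmode k x) =
      ∑' m : ℤ, convC s u v m * fmode m x := by
  have hu' : Summable fun j : ℤ => ‖u j * fmode (s * j) x‖ := by
    simpa only [norm_mul, norm_fmode, mul_one] using hu
  have hv' : Summable fun k : ℤ => ‖v k * fmode k x‖ := by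
    simpa only [norm_mul, norm_fmode, mul_one] using hv
  rw [tsum_mul_tsum_of_summable_norm hu' hv']
  have hsum : Summable (fun z : ℤ × ℤ => (u z.1 * fmode (s * z.1) x) * (v z.2 * fmode z.2 x)) :=
    summable_mul_of_summable_norm (f := fun j : ℤ => u j * fmode (s * j) x)
      (g := fun k : ℤ => v k * fmode k x) hu' hv'
  have key : ∀ p : ℤ × ℤ,
      (fun z : ℤ × ℤ => (u z.1 * fmode (s * z.1) x) * (v z.2 * fmode z.2 x)) ((convEquiv s).symm p)
      = u p.2 * v (p.1 - s * p.2) * fmode p.1 x := by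
    intro p
    rw [convEquiv_symm_apply]
    show (u p.2 * fmode (s * p.2) x) * (v (p.1 - s * p.2) * fmode (p.1 - s * p.2) x) = _
    rw [mul_mul_mul_comm, fmode_mul]
    ring_nf
  have hsum2 : Summable fun p : ℤ × ℤ => u p.2 * v (p.1 - s * p.2) * fmode p.1 x :=
    (((convEquiv s).symm.summable_iff).2 hsum).congr key
  rw [← Equiv.tsum_eq (convEquiv s).symm, tsum_congr key,
    Summable.tsum_prod' hsum2 (fun m => hsum2.prod_factor m)]
  refine tsum_congr fun m => ?_
  simp only
  rw [convC, tsum_mul_right]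

end

lemma integral_series {d : ℤ → ℂ} (hd : Summable fun k => ‖d k‖) :
    (∫ y in (-Real.pi)..Real.pi, (∑' k : ℤ, d k * fmode k y)) = 2 * Real.pi * d 0 := by
  have hle : (-Real.pi) ≤ Real.pi := by linarith [Real.pi_pos]
  have hInt : ∀ k : ℤ, Integrable (fun y => d k * fmode k y)
      (volume.restrict (Set.Ioc (-Real.pi) Real.pi)) := by
    intro k
    exact ((continuous_const.mul (fmode_continuous k)).integrableOn_Ioc).integrable
  have hNorm : ∀ k : ℤ, (∫ y in Set.Ioc (-Real.pi) Real.pi, ‖d k * fmode k y‖) =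
      ‖d k‖ * (2 * Real.pi) := by
    intro k
    have h1 : ∀ y : ℝ, ‖d k * fmode k y‖ = ‖d k‖ := by
      intro y; rw [norm_mul, norm_fmode, mul_one]
    simp only [h1]
    rw [setIntegral_const, measureReal_def, Real.volume_Ioc, ENNReal.toReal_ofReal (by linarith)]
    rw [smul_eq_mul]; ring
  have hSum : Summable fun k : ℤ => ∫ y in Set.Ioc (-Real.pi) Real.pi, ‖d k * fmode k y‖ := by
    simp only [hNorm]
    exact hd.mul_right _
  rw [intervalIntegral.integral_of_le hle]
  rw [← MeasureTheory.integral_tsum_of_summable_integral_norm hInt hSum]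
  have h2 : ∀ k : ℤ, (∫ y in Set.Ioc (-Real.pi) Real.pi, d k * fmode k y) =
      d k * if k = 0 then (2 * Real.pi : ℂ) else 0 := by
    intro k
    rw [MeasureTheory.integral_const_mul, ← intervalIntegral.integral_of_le hle, integral_fmode]
  simp only [h2]
  rw [tsum_eq_single 0 (fun k hk => by simp [hk])]
  simp [mul_comm]

lemma shift_summable {d : ℤ → ℂ} (hd : Summable fun k => ‖d k‖) (m : ℤ) :
    Summable fun k : ℤ => ‖d (k + m)‖ :=
  ((Equiv.addRight m).summable_iff (f := fun k => ‖d k‖)).2 hd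

lemma extract {d : ℤ → ℂ} (hd : Summable fun k => ‖d k‖) (m : ℤ) :
    (∫ x in (-Real.pi)..Real.pi, (∑' k : ℤ, d k * fmode k x) * fmode (-m) x)
      = 2 * Real.pi * d m := by
  have key : ∀ x : ℝ, (∑' k : ℤ, d k * fmode k x) * fmode (-m) x
      = ∑' k : ℤ, d (k + m) * fmode k x := by
    intro x
    rw [← tsum_mul_right (f := fun k : ℤ => d k * fmode k x) (a := fmode (-m) x)]
    rw [← Equiv.tsum_eq (Equiv.addRight m) (fun k => d k * fmode k x * fmode (-m) x)]
    refine tsum_congr fun k => ?_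
    show d (k + m) * fmode (k + m) x * fmode (-m) x = d (k + m) * fmode k x
    rw [mul_assoc, fmode_mul]
    norm_num
  calc (∫ x in (-Real.pi)..Real.pi, (∑' k : ℤ, d k * fmode k x) * fmode (-m) x)
      = ∫ x in (-Real.pi)..Real.pi, (∑' k : ℤ, d (k + m) * fmode k x) :=
        intervalIntegral.integral_congr fun x _ => key x
    _ = 2 * Real.pi * d (0 + m) := integral_series (shift_summable hd m)
    _ = 2 * Real.pi * d m := by rw [zero_add]

lemma series_unique {d e : ℤ → ℂ} (hd : Summable fun k => ‖d k‖)
    (he : Summable fun k => ‖e k‖)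
    (h : ∀ x : ℝ, (∑' k : ℤ, d k * fmode k x) = ∑' k : ℤ, e k * fmode k x) (m : ℤ) :
    d m = e m := by
  have h1 := extract hd m
  have h2 := extract he m
  rw [intervalIntegral.integral_congr (g := fun x => (∑' k : ℤ, e k * fmode k x) * fmode (-m) x)
    (fun x _ => by rw [h x])] at h1
  rw [h2] at h1
  have hpi : (2 * Real.pi : ℂ) ≠ 0 := by simp [Real.pi_ne_zero]
  exact mul_left_cancel₀ hpi h1.symm
section Part2

lemma tsum_indicator (κ : ℂ) (x : ℝ) :
    ∑' m : ℤ, (if m = 0 then κ else 0) * fmode m x = κ := by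
  rw [tsum_eq_single 0 (fun m hm => by simp [hm])]
  simp [fmode_zero]

lemma summable_indicator (κ : ℂ) (x : ℝ) :
    Summable fun m : ℤ => (if m = 0 then κ else 0) * fmode m x := by
  apply summable_of_ne_finset_zero (s := ({0} : Finset ℤ))
  intro m hm
  simp only [Finset.mem_singleton] at hm
  simp [hm]

lemma summable_mode {d : ℤ → ℂ} (hd : Summable fun k => ‖d k‖) (x : ℝ) :
    Summable fun m : ℤ => d m * fmode m x :=
  Summable.of_norm (by simpa only [norm_mul, norm_fmode, mul_one] using hd)

lemma combine2 {d1 d2 : ℤ → ℂ} (κ : ℂ) (h1 : Summable fun k => ‖d1 k‖)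
    (h2 : Summable fun k => ‖d2 k‖) (x : ℝ) :
    ∑' m : ℤ, (d1 m + d2 m - (if m = 0 then κ else 0)) * fmode m x
      = (∑' m : ℤ, d1 m * fmode m x) + (∑' m : ℤ, d2 m * fmode m x) - κ := by
  have s1 := summable_mode h1 x
  have s2 := summable_mode h2 x
  have sind := summable_indicator κ x
  have key : ∀ m : ℤ, (d1 m + d2 m - (if m = 0 then κ else 0)) * fmode m x
      = (d1 m * fmode m x + d2 m * fmode m x) - (if m = 0 then κ else 0) * fmode m x := by
    intro m; ring
  rw [tsum_congr key, Summable.tsum_sub (s1.add s2) sind, Summable.tsum_add s1 s2, tsum_indicator]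

lemma combine3 {d1 d2 d3 : ℤ → ℂ} (κ : ℂ) (h1 : Summable fun k => ‖d1 k‖)
    (h2 : Summable fun k => ‖d2 k‖) (h3 : Summable fun k => ‖d3 k‖) (x : ℝ) :
    ∑' m : ℤ, (d1 m + d2 m + d3 m - (if m = 0 then κ else 0)) * fmode m x
      = (∑' m : ℤ, d1 m * fmode m x) + (∑' m : ℤ, d2 m * fmode m x)
          + (∑' m : ℤ, d3 m * fmode m x) - κ := by
  have s1 := summable_mode h1 x
  have s2 := summable_mode h2 x
  have s3 := summable_mode h3 x
  have sind := summable_indicator κ x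
  have key : ∀ m : ℤ, (d1 m + d2 m + d3 m - (if m = 0 then κ else 0)) * fmode m x
      = ((d1 m * fmode m x + d2 m * fmode m x) + d3 m * fmode m x)
        - (if m = 0 then κ else 0) * fmode m x := by
    intro m; ring
  rw [tsum_congr key, Summable.tsum_sub ((s1.add s2).add s3) sind, Summable.tsum_add (s1.add s2) s3,
    Summable.tsum_add s1 s2, tsum_indicator]

-- summability of coefficients
lemma summable_a {a : ℤ → ℂ} (ha : Summable fun k : ℤ => (1 + |(k : ℝ)|) * ‖a k‖) :
    Summable fun k : ℤ => ‖a k‖ := by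
  refine Summable.of_nonneg_of_le (fun k => norm_nonneg _) (fun k => ?_) ha
  have h0 : (0:ℝ) ≤ |(k:ℝ)| := abs_nonneg _
  nlinarith [norm_nonneg (a k)]

lemma summable_va {a : ℤ → ℂ} (ha : Summable fun k : ℤ => (1 + |(k : ℝ)|) * ‖a k‖) :
    Summable fun k : ℤ => ‖Complex.I * (k : ℂ) * a k‖ := by
  refine Summable.of_nonneg_of_le (fun k => norm_nonneg _) (fun k => ?_) ha
  rw [norm_mul, norm_mul, Complex.norm_I, one_mul]
  have h1 : ‖((k:ℤ) : ℂ)‖ = |(k:ℝ)| := by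
    rw [Complex.norm_intCast]
  rw [h1]
  have h0 : (0:ℝ) ≤ ‖a k‖ := norm_nonneg _
  nlinarith [abs_nonneg ((k:ℝ))]

lemma natmul_inj (n : ℕ) (hn : 2 ≤ n) (l : ℤ) :
    Function.Injective (fun k : ℤ => (n : ℤ) * k + l) := by
  intro k1 k2 h
  simp only [add_left_inj] at h
  have hN : (n : ℤ) ≠ 0 := by positivity
  exact mul_left_cancel₀ hN h

lemma summable_shift {a : ℤ → ℂ} (ha : Summable fun k : ℤ => (1 + |(k : ℝ)|) * ‖a k‖)
    (n : ℕ) (hn : 2 ≤ n) (l : ℤ) :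
    Summable fun k : ℤ => (1 + |(((n : ℤ) * k + l : ℤ) : ℝ)|) * ‖a ((n : ℤ) * k + l)‖ :=
  ha.comp_injective (natmul_inj n hn l)

lemma abs_le_key {N l t : ℤ} (hN : 2 ≤ N) (h0 : 0 ≤ l) (h2 : l ≤ N - 1) :
    |t| ≤ |N * t + l| := by
  rcases le_or_gt 0 t with ht | ht
  · rw [abs_of_nonneg ht, abs_of_nonneg (by nlinarith)]
    nlinarith
  · rw [abs_of_neg ht, abs_of_nonpos (by nlinarith)]
    nlinarith

lemma summable_al {a : ℤ → ℂ} (ha : Summable fun k : ℤ => (1 + |(k : ℝ)|) * ‖a k‖)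
    (n : ℕ) (hn : 2 ≤ n) (l : ℤ) :
    Summable fun k : ℤ => ‖a ((n : ℤ) * k + l)‖ := by
  refine Summable.of_nonneg_of_le (fun k => norm_nonneg _) (fun k => ?_)
    (summable_shift ha n hn l)
  have h0 : (0:ℝ) ≤ |(((n : ℤ) * k + l : ℤ) : ℝ)| := abs_nonneg _
  nlinarith [norm_nonneg (a ((n : ℤ) * k + l))]

lemma summable_val {a : ℤ → ℂ} (ha : Summable fun k : ℤ => (1 + |(k : ℝ)|) * ‖a k‖)
    (n : ℕ) (hn : 2 ≤ n) (l : ℤ) (hl0 : 0 ≤ l) (hl1 : l ≤ (n : ℤ) - 1) :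
    Summable fun k : ℤ => ‖Complex.I * (k : ℂ) * a ((n : ℤ) * k + l)‖ := by
  refine Summable.of_nonneg_of_le (fun k => norm_nonneg _) (fun k => ?_)
    (summable_shift ha n hn l)
  rw [norm_mul, norm_mul, Complex.norm_I, one_mul, Complex.norm_intCast]
  have hNk : |(k:ℝ)| ≤ |(((n : ℤ) * k + l : ℤ) : ℝ)| := by
    have := abs_le_key (N := (n:ℤ)) (l := l) (t := k) (by exact_mod_cast hn) hl0 hl1
    calc |(k:ℝ)| = ((|k| : ℤ) : ℝ) := by push_cast; rfl
      _ ≤ ((|(n:ℤ) * k + l| : ℤ) : ℝ) := by exact_mod_cast this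
      _ = |(((n : ℤ) * k + l : ℤ) : ℝ)| := by push_cast; rfl
  have h0 : (0:ℝ) ≤ ‖a ((n : ℤ) * k + l)‖ := norm_nonneg _
  have h1 : (0:ℝ) ≤ |(k:ℝ)| := abs_nonneg _
  nlinarith

lemma summable_sgn {a : ℤ → ℂ} (ha : Summable fun k : ℤ => ‖a k‖) :
    Summable fun m : ℤ => ‖(-Complex.I) * ((m.sign : ℤ) : ℂ) * a m‖ := by
  refine Summable.of_nonneg_of_le (fun k => norm_nonneg _) (fun m => ?_) ha
  rw [norm_mul, norm_mul, norm_neg, Complex.norm_I, one_mul, Complex.norm_intCast]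
  have hs : |((m.sign : ℤ) : ℝ)| ≤ 1 := by
    have := Int.sign_mul_abs m
    rcases Int.lt_trichotomy m 0 with h | h | h
    · simp [Int.sign_eq_neg_one_of_neg h]
    · simp [h]
    · simp [Int.sign_eq_one_of_pos h]
  have h0 : (0:ℝ) ≤ ‖a m‖ := norm_nonneg _
  nlinarith [abs_nonneg (((m.sign : ℤ) : ℝ))]

end Part2
section Part3

/-- LHS coefficients -/
noncomputable def DLc (n : ℕ) (a c : ℤ → ℂ) (m : ℤ) : ℂ :=
  convC (n : ℤ) (fun k => (1 / (n : ℂ)) * c k) (fun k => Complex.I * (k : ℂ) * a k) m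
  + (-Complex.I) * ((m.sign : ℤ) : ℂ) * a m
  - (if m = 0 then
      convC (n : ℤ) (fun k => (1 / (n : ℂ)) * c k) (fun k => Complex.I * (k : ℂ) * a k) 0 else 0)

/-- RHS coefficients -/
noncomputable def ERc (n : ℕ) (l : ℤ) (a c : ℤ → ℂ) (k : ℤ) : ℂ :=
  convC 1 c (fun j => Complex.I * (j : ℂ) * a ((n : ℤ) * j + l)) k
  + Complex.I * ((l : ℂ) / (n : ℂ)) * convC 1 c (fun j => a ((n : ℤ) * j + l)) k
  + (-Complex.I) * ((k.sign : ℤ) : ℂ) * a ((n : ℤ) * k + l)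
  - (if k = 0 then Complex.I * a l else 0)

variable {a c : ℤ → ℂ} {n : ℕ}

lemma summable_uc (hc : Summable fun k : ℤ => ‖c k‖) :
    Summable fun k : ℤ => ‖(1 / (n : ℂ)) * c k‖ := by
  simp only [norm_mul]
  exact hc.mul_left _

lemma lhs_prod (hn : 2 ≤ n) (ha : Summable fun k : ℤ => (1 + |(k : ℝ)|) * ‖a k‖)
    (hc : Summable fun k : ℤ => ‖c k‖) (x : ℝ) :
    (1 / (n : ℂ)) * (∑' k : ℤ, c k * fmode k (n * x)) *
        (∑' k : ℤ, Complex.I * (k : ℂ) * a k * fmode k x) =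
      ∑' m : ℤ, convC (n : ℤ) (fun k => (1 / (n : ℂ)) * c k)
        (fun k => Complex.I * (k : ℂ) * a k) m * fmode m x := by
  have h1 : (1 / (n : ℂ)) * (∑' k : ℤ, c k * fmode k (n * x)) =
      ∑' k : ℤ, ((1 / (n : ℂ)) * c k) * fmode ((n : ℤ) * k) x := by
    rw [← tsum_mul_left]
    refine tsum_congr fun k => ?_
    rw [fmode_stretch, mul_assoc]
  rw [h1]
  exact prodS ((n : ℤ)) (summable_uc hc) (summable_va ha) x

lemma lhs_eq (hn : 2 ≤ n) (ha : Summable fun k : ℤ => (1 + |(k : ℝ)|) * ‖a k‖)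
    (hc : Summable fun k : ℤ => ‖c k‖) (x : ℝ) :
    (1 / (n : ℂ)) * (∑' k : ℤ, c k * fmode k (n * x)) *
          (∑' k : ℤ, Complex.I * (k : ℂ) * a k * fmode k x)
        + (∑' k : ℤ, (-Complex.I) * ((k.sign : ℤ) : ℂ) * a k * fmode k x)
        - (1 / (2 * (Real.pi : ℂ))) *
            ∫ y in (-Real.pi)..Real.pi,
              (1 / (n : ℂ)) * (∑' k : ℤ, c k * fmode k (n * y)) *
                (∑' k : ℤ, Complex.I * (k : ℂ) * a k * fmode k y) =
      ∑' m : ℤ, DLc n a c m * fmode m x := by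
  have hW : Summable fun m : ℤ => ‖convC (n : ℤ) (fun k => (1 / (n : ℂ)) * c k)
      (fun k => Complex.I * (k : ℂ) * a k) m‖ :=
    summable_conv _ (summable_uc hc) (summable_va ha)
  have hS := summable_sgn (summable_a ha)
  have hint : (∫ y in (-Real.pi)..Real.pi,
      (1 / (n : ℂ)) * (∑' k : ℤ, c k * fmode k (n * y)) *
        (∑' k : ℤ, Complex.I * (k : ℂ) * a k * fmode k y)) =
      2 * Real.pi * convC (n : ℤ) (fun k => (1 / (n : ℂ)) * c k)
        (fun k => Complex.I * (k : ℂ) * a k) 0 := by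
    rw [intervalIntegral.integral_congr (fun y _ => lhs_prod hn ha hc y)]
    exact integral_series hW
  rw [lhs_prod hn ha hc x, hint]
  have hpi : (1 / (2 * (Real.pi : ℂ))) * (2 * Real.pi *
      convC (n : ℤ) (fun k => (1 / (n : ℂ)) * c k) (fun k => Complex.I * (k : ℂ) * a k) 0) =
      convC (n : ℤ) (fun k => (1 / (n : ℂ)) * c k) (fun k => Complex.I * (k : ℂ) * a k) 0 := by
    have h2 : (2 * (Real.pi : ℂ)) ≠ 0 := by simp [Real.pi_ne_zero]
    field_simp
  rw [hpi, ← combine2 (d1 := fun m => convC (n : ℤ) (fun k => (1 / (n : ℂ)) * c k)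
      (fun k => Complex.I * (k : ℂ) * a k) m)
      (d2 := fun m => (-Complex.I) * ((m.sign : ℤ) : ℂ) * a m) _ hW hS x]
  rfl

lemma rhs_eq (hn : 2 ≤ n) (ha : Summable fun k : ℤ => (1 + |(k : ℝ)|) * ‖a k‖)
    (hc : Summable fun k : ℤ => ‖c k‖) (l : ℤ) (hl0 : 1 ≤ l) (hl1 : l ≤ (n : ℤ) - 1)
    (x : ℝ) :
    (∑' k : ℤ, c k * fmode k x) *
          (∑' k : ℤ, Complex.I * (k : ℂ) * a ((n : ℤ) * k + l) * fmode k x)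
        + Complex.I * ((l : ℂ) / (n : ℂ)) * (∑' k : ℤ, c k * fmode k x) *
            (∑' k : ℤ, a ((n : ℤ) * k + l) * fmode k x)
        + (∑' k : ℤ, (-Complex.I) * ((k.sign : ℤ) : ℂ) * a ((n : ℤ) * k + l) * fmode k x)
        - Complex.I * a l =
      ∑' k : ℤ, ERc n l a c k * fmode k x := by
  have hone : (∑' k : ℤ, c k * fmode k x) = ∑' j : ℤ, c j * fmode (1 * j) x := by
    refine tsum_congr fun j => ?_; rw [one_mul]
  have hval := summable_val ha n hn l (by omega) hl1
  have hal := summable_al ha n hn l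
  have hP : (∑' k : ℤ, c k * fmode k x) *
      (∑' k : ℤ, Complex.I * (k : ℂ) * a ((n : ℤ) * k + l) * fmode k x) =
      ∑' k : ℤ, convC 1 c (fun j => Complex.I * (j : ℂ) * a ((n : ℤ) * j + l)) k * fmode k x := by
    rw [hone]
    exact prodS 1 hc hval x
  have hQ : (∑' k : ℤ, c k * fmode k x) * (∑' k : ℤ, a ((n : ℤ) * k + l) * fmode k x) =
      ∑' k : ℤ, convC 1 c (fun j => a ((n : ℤ) * j + l)) k * fmode k x := by
    rw [hone]
    exact prodS 1 hc hal x
  have hQ2 : Complex.I * ((l : ℂ) / (n : ℂ)) * (∑' k : ℤ, c k * fmode k x) *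
      (∑' k : ℤ, a ((n : ℤ) * k + l) * fmode k x) =
      ∑' k : ℤ, (Complex.I * ((l : ℂ) / (n : ℂ)) *
        convC 1 c (fun j => a ((n : ℤ) * j + l)) k) * fmode k x := by
    rw [mul_assoc, hQ, ← tsum_mul_left]
    refine tsum_congr fun k => ?_
    ring
  have hPs : Summable fun k : ℤ =>
      ‖convC 1 c (fun j => Complex.I * (j : ℂ) * a ((n : ℤ) * j + l)) k‖ :=
    summable_conv 1 hc hval
  have hQs : Summable fun k : ℤ => ‖Complex.I * ((l : ℂ) / (n : ℂ)) *
      convC 1 c (fun j => a ((n : ℤ) * j + l)) k‖ := by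
    simp only [norm_mul]
    exact (summable_conv 1 hc hal).mul_left _
  have hSs := summable_sgn (a := fun m => a ((n : ℤ) * m + l)) (summable_al ha n hn l)
  rw [hP, hQ2, ← combine3 (d1 := fun k =>
      convC 1 c (fun j => Complex.I * (j : ℂ) * a ((n : ℤ) * j + l)) k)
      (d2 := fun k => Complex.I * ((l : ℂ) / (n : ℂ)) *
        convC 1 c (fun j => a ((n : ℤ) * j + l)) k)
      (d3 := fun k => (-Complex.I) * ((k.sign : ℤ) : ℂ) * a ((n : ℤ) * k + l))
      (Complex.I * a l) hPs hQs hSs x]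
  rfl

end Part3
section Part4

variable {a c : ℤ → ℂ} {n : ℕ}

lemma sign_shift (hn : 2 ≤ n) {l : ℤ} (hl0 : 1 ≤ l) (hl1 : l ≤ (n : ℤ) - 1) (k : ℤ) :
    ((n : ℤ) * k + l).sign = if k = 0 then 1 else k.sign := by
  have hN : (2 : ℤ) ≤ (n : ℤ) := by exact_mod_cast hn
  rcases lt_trichotomy k 0 with h | h | h
  · rw [if_neg h.ne, Int.sign_eq_neg_one_of_neg h, Int.sign_eq_neg_one_of_neg (by nlinarith)]
  · subst h; rw [if_pos rfl]
    simp only [mul_zero, zero_add]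
    exact Int.sign_eq_one_of_pos (by omega)
  · rw [if_neg h.ne', Int.sign_eq_one_of_pos h, Int.sign_eq_one_of_pos (by nlinarith)]

lemma nkl_ne_zero (hn : 2 ≤ n) {l : ℤ} (hl0 : 1 ≤ l) (hl1 : l ≤ (n : ℤ) - 1) (k : ℤ) :
    (n : ℤ) * k + l ≠ 0 := by
  have hN : (2 : ℤ) ≤ (n : ℤ) := by exact_mod_cast hn
  intro h
  rcases lt_trichotomy k 0 with hk | hk | hk
  · nlinarith
  · subst hk; omega
  · nlinarith

lemma W_mul (haz : ∀ k : ℤ, a ((n : ℤ) * k) = 0) (k : ℤ) :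
    convC (n : ℤ) (fun k => (1 / (n : ℂ)) * c k)
      (fun k => Complex.I * (k : ℂ) * a k) ((n : ℤ) * k) = 0 := by
  unfold convC
  rw [tsum_congr (fun j => ?_), tsum_zero]
  have h1 : (n : ℤ) * k - (n : ℤ) * j = (n : ℤ) * (k - j) := by ring
  simp only [h1, haz]
  ring

lemma DL_mul (haz : ∀ k : ℤ, a ((n : ℤ) * k) = 0) (k : ℤ) :
    DLc n a c ((n : ℤ) * k) = 0 := by
  unfold DLc
  rw [W_mul haz, haz]
  have h0 : convC (n : ℤ) (fun k => (1 / (n : ℂ)) * c k)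
      (fun k => Complex.I * (k : ℂ) * a k) 0 = 0 := by
    have := W_mul (c := c) haz 0
    simpa using this
  rw [h0]
  simp

lemma DL_eq_ER (hn : 2 ≤ n) (ha : Summable fun k : ℤ => (1 + |(k : ℝ)|) * ‖a k‖)
    (hc : Summable fun k : ℤ => ‖c k‖) {l : ℤ} (hl0 : 1 ≤ l) (hl1 : l ≤ (n : ℤ) - 1)
    (k : ℤ) : DLc n a c ((n : ℤ) * k + l) = ERc n l a c k := by
  have hnC : ((n : ℂ)) ≠ 0 := Nat.cast_ne_zero.2 (by omega)
  have hval := summable_val ha n hn l (by omega) hl1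
  have hal := summable_al ha n hn l
  -- convolution splitting
  have hW : convC (n : ℤ) (fun j => (1 / (n : ℂ)) * c j)
      (fun j => Complex.I * (j : ℂ) * a j) ((n : ℤ) * k + l)
      = convC 1 c (fun j => Complex.I * (j : ℂ) * a ((n : ℤ) * j + l)) k
        + Complex.I * ((l : ℂ) / (n : ℂ)) * convC 1 c (fun j => a ((n : ℤ) * j + l)) k := by
    unfold convC
    have key : ∀ j : ℤ,
        ((1 / (n : ℂ)) * c j) * (Complex.I * (((n : ℤ) * k + l - (n : ℤ) * j : ℤ) : ℂ)
          * a ((n : ℤ) * k + l - (n : ℤ) * j))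
        = c j * (Complex.I * ((k - 1 * j : ℤ) : ℂ) * a ((n : ℤ) * (k - 1 * j) + l))
          + (Complex.I * ((l : ℂ) / (n : ℂ))) * (c j * a ((n : ℤ) * (k - 1 * j) + l)) := by
      intro j
      have hidx : (n : ℤ) * k + l - (n : ℤ) * j = (n : ℤ) * (k - 1 * j) + l := by ring
      rw [hidx]
      have hcast : (((n : ℤ) * (k - 1 * j) + l : ℤ) : ℂ)
          = (n : ℂ) * ((k - 1 * j : ℤ) : ℂ) + (l : ℂ) := by push_cast; ring
      rw [hcast]
      field_simp
    rw [tsum_congr key]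
    have s1 : Summable fun j : ℤ =>
        c j * (Complex.I * ((k - 1 * j : ℤ) : ℂ) * a ((n : ℤ) * (k - 1 * j) + l)) :=
      summable_conv_inner 1 hc hval k
    have s2 : Summable fun j : ℤ =>
        (Complex.I * ((l : ℂ) / (n : ℂ))) * (c j * a ((n : ℤ) * (k - 1 * j) + l)) :=
      (summable_conv_inner 1 hc hal k).mul_left _
    rw [Summable.tsum_add s1 s2, tsum_mul_left]
  unfold DLc ERc
  rw [hW, if_neg (nkl_ne_zero hn hl0 hl1 k)]
  have key : (-Complex.I) * ((((n : ℤ) * k + l).sign : ℤ) : ℂ) * a ((n : ℤ) * k + l)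
      = (-Complex.I) * ((k.sign : ℤ) : ℂ) * a ((n : ℤ) * k + l)
        - (if k = 0 then Complex.I * a l else 0) := by
    rw [sign_shift hn hl0 hl1 k]
    rcases eq_or_ne k 0 with h | h
    · subst h
      simp only [if_pos rfl, mul_zero, zero_add, Int.sign_zero]
      push_cast
      ring
    · simp only [if_neg h]
      ring
  rw [key]
  ring

end Part4
section Part5

variable {a c : ℤ → ℂ} {n : ℕ}

lemma summable_DL (hn : 2 ≤ n) (ha : Summable fun k : ℤ => (1 + |(k : ℝ)|) * ‖a k‖)
    (hc : Summable fun k : ℤ => ‖c k‖) :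
    Summable fun m : ℤ => ‖DLc n a c m‖ := by
  rw [summable_norm_iff]
  have h1 : Summable (fun m : ℤ => convC (n : ℤ) (fun k => (1 / (n : ℂ)) * c k)
      (fun k => Complex.I * (k : ℂ) * a k) m) :=
    Summable.of_norm (summable_conv _ (summable_uc hc) (summable_va ha))
  have h2 : Summable (fun m : ℤ => (-Complex.I) * ((m.sign : ℤ) : ℂ) * a m) :=
    Summable.of_norm (summable_sgn (summable_a ha))
  have h3 : Summable (fun m : ℤ => if m = 0 then convC (n : ℤ)
      (fun k => (1 / (n : ℂ)) * c k) (fun k => Complex.I * (k : ℂ) * a k) 0 else 0) := by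
    apply summable_of_ne_finset_zero (s := ({0} : Finset ℤ))
    intro m hm
    simp only [Finset.mem_singleton] at hm
    simp [hm]
  exact (h1.add h2).sub h3

lemma summable_ER (hn : 2 ≤ n) (ha : Summable fun k : ℤ => (1 + |(k : ℝ)|) * ‖a k‖)
    (hc : Summable fun k : ℤ => ‖c k‖) {l : ℤ} (hl0 : 1 ≤ l) (hl1 : l ≤ (n : ℤ) - 1) :
    Summable fun k : ℤ => ‖ERc n l a c k‖ := by
  rw [summable_norm_iff]
  have hval := summable_val ha n hn l (by omega) hl1
  have hal := summable_al ha n hn l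
  have h1 : Summable (fun k : ℤ => convC 1 c
      (fun j => Complex.I * (j : ℂ) * a ((n : ℤ) * j + l)) k) :=
    Summable.of_norm (summable_conv 1 hc hval)
  have h2 : Summable (fun k : ℤ => Complex.I * ((l : ℂ) / (n : ℂ)) *
      convC 1 c (fun j => a ((n : ℤ) * j + l)) k) :=
    (Summable.of_norm (summable_conv 1 hc hal)).mul_left _
  have h3 : Summable (fun k : ℤ => (-Complex.I) * ((k.sign : ℤ) : ℂ) * a ((n : ℤ) * k + l)) :=
    Summable.of_norm (summable_sgn hal)
  have h4 : Summable (fun k : ℤ => if k = 0 then Complex.I * a l else 0) := by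
    apply summable_of_ne_finset_zero (s := ({0} : Finset ℤ))
    intro m hm
    simp only [Finset.mem_singleton] at hm
    simp [hm]
  exact ((h1.add h2).add h3).sub h4

end Part5


/-- unfolding of the linearized operator.  Let `n ≥ 2`, and let
`f, g` be smooth `2π`-periodic functions (with absolutely summable, suitably weighted
Fourier coefficients `a, b`) whose Fourier coefficients vanish on multiples of `n`.
Let `V` be smooth with coefficients `c`, and `Vⁿ(x) = (1/n) V(nx)`.  Then
`g = Vⁿ ∂ₓ f + Hf - (1/2π)∫ Vⁿ ∂ₓ f` holds if and only if for every `1 ≤ l ≤ n-1`,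
with `θ = l/n`, the projections `f^{l,n}, g^{l,n}` (with coefficients `a (nk+l)`,
`b (nk+l)`) satisfy `g^{l,n} = V ∂ₓ f^{l,n} + iθ V f^{l,n} + H f^{l,n} - i (f^{l,n})^(0)`. -/
theorem stmt15 (n : ℕ) (hn : 2 ≤ n) (a b c : ℤ → ℂ)
    (ha : Summable fun k : ℤ => (1 + |(k : ℝ)|) * ‖a k‖)
    (hb : Summable fun k : ℤ => ‖b k‖)
    (hc : Summable fun k : ℤ => ‖c k‖)
    (haz : ∀ k : ℤ, a ((n : ℤ) * k) = 0)
    (hbz : ∀ k : ℤ, b ((n : ℤ) * k) = 0) :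
    (∀ x : ℝ,
        (∑' k : ℤ, b k * fmode k x) =
          (1 / (n : ℂ)) * (∑' k : ℤ, c k * fmode k (n * x)) *
              (∑' k : ℤ, Complex.I * (k : ℂ) * a k * fmode k x)
            + (∑' k : ℤ, (-Complex.I) * ((k.sign : ℤ) : ℂ) * a k * fmode k x)
            - (1 / (2 * (Real.pi : ℂ))) *
                ∫ y in (-Real.pi)..Real.pi,
                  (1 / (n : ℂ)) * (∑' k : ℤ, c k * fmode k (n * y)) *
                    (∑' k : ℤ, Complex.I * (k : ℂ) * a k * fmode k y))
      ↔
      (∀ l : ℤ, 1 ≤ l → l ≤ (n : ℤ) - 1 → ∀ x : ℝ,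
        (∑' k : ℤ, b ((n : ℤ) * k + l) * fmode k x) =
          (∑' k : ℤ, c k * fmode k x) *
              (∑' k : ℤ, Complex.I * (k : ℂ) * a ((n : ℤ) * k + l) * fmode k x)
            + Complex.I * ((l : ℂ) / (n : ℂ)) * (∑' k : ℤ, c k * fmode k x) *
                (∑' k : ℤ, a ((n : ℤ) * k + l) * fmode k x)
            + (∑' k : ℤ, (-Complex.I) * ((k.sign : ℤ) : ℂ) * a ((n : ℤ) * k + l) * fmode k x)
            - Complex.I * a l) := by
  have hDs := summable_DL hn ha hc
  constructor
  · intro h l hl0 hl1 x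
    have hcoef : ∀ m : ℤ, b m = DLc n a c m := fun m =>
      series_unique hb hDs (fun y => (h y).trans (lhs_eq hn ha hc y)) m
    rw [rhs_eq hn ha hc l hl0 hl1 x]
    refine tsum_congr fun k => ?_
    rw [hcoef ((n : ℤ) * k + l), DL_eq_ER hn ha hc hl0 hl1 k]
  · intro h x
    have hcoef : ∀ m : ℤ, b m = DLc n a c m := by
      intro m
      have hN : (0 : ℤ) < (n : ℤ) := by positivity
      obtain ⟨k, l, hm, hl0, hl1⟩ : ∃ k l : ℤ, m = (n : ℤ) * k + l ∧ 0 ≤ l ∧ l < (n : ℤ) :=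
        ⟨m / (n : ℤ), m % (n : ℤ), by rw [Int.mul_ediv_add_emod],
          Int.emod_nonneg m hN.ne', Int.emod_lt_of_pos m hN⟩
      subst hm
      rcases eq_or_lt_of_le hl0 with h0 | h0
      · rw [← h0, add_zero, hbz, DL_mul haz]
      · have h1 : (1 : ℤ) ≤ l := h0
        have h2 : l ≤ (n : ℤ) - 1 := by omega
        have hE := h l h1 h2
        have hb' : b ((n : ℤ) * k + l) = ERc n l a c k :=
          series_unique (hb.comp_injective (natmul_inj n hn l))
            (summable_ER hn ha hc h1 h2)
            (fun y => (hE y).trans (rhs_eq hn ha hc l h1 h2 y)) k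
        rw [hb', ← DL_eq_ER hn ha hc h1 h2 k]
    rw [lhs_eq hn ha hc x]
    exact tsum_congr fun m => by rw [hcoef m]
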